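/- For every t and every claim H ∈ L^0_+(F_T), the set { E_Q[H | F_t] : Q ∈ M_e } is F_t-countably convex: for (Q^n) ⊆ M_e and F_t-measurable λ^n ≥ 0 with Σ λ^n = 1, there exists Q ∈ M_e with Σ_n λ^n E_{Q^n}[H | F_t] = E_Q[H | F_t]. -/

import Mathlib

open MeasureTheory

variable {Ω : Type*}

/-- A self-financing trading strategy: `ξ k` (the position held over `(k-1, k]`) is
`F_{k-1}`-measurable. -/
def Predictable {m : MeasurableSpace Ω} {d : ℕ} (F : Filtration ℕ m)
    (ξ : ℕ → Ω → Fin d → ℝ) : Prop :=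
  ∀ k : ℕ, 1 ≤ k → Measurable[F (k - 1)] (ξ k)

/-- Gains from trading with strategy `ξ` in `X` from time `t` to time `T`:
`G_t(ξ) = ∑_{k=t+1}^T ξ_k · (X_k - X_{k-1})`. -/
def Gains {d : ℕ} (X ξ : ℕ → Ω → Fin d → ℝ) (t T : ℕ) (ω : Ω) : ℝ :=
  ∑ k ∈ Finset.Icc (t + 1) T, ∑ i, ξ k ω i * (X k ω i - X (k - 1) ω i)

/-- `Q` is an equivalent martingale measure for the price process `X` on `{0,…,T}`:
`Q` is a probability measure equivalent to `P` under which each component of `X` is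
integrable and a martingale. -/
def IsEMM {m : MeasurableSpace Ω} {d : ℕ} (P Q : Measure Ω) (F : Filtration ℕ m)
    (X : ℕ → Ω → Fin d → ℝ) (T : ℕ) : Prop :=
  IsProbabilityMeasure Q ∧ (∀ A : Set Ω, P A = 0 ↔ Q A = 0) ∧
    (∀ t, t ≤ T → ∀ i, Integrable (fun ω => X t ω i) Q) ∧
    (∀ t, t < T → ∀ i,
      (Q[(fun ω => X (t + 1) ω i)|F t]) =ᵐ[Q] fun ω => X t ω i)

/-- The set of super-hedging prices at time `t` for the claim `H`. -/
def SuperPrices {m : MeasurableSpace Ω} {d : ℕ} (P : Measure Ω)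
    (F : Filtration ℕ m) (X : ℕ → Ω → Fin d → ℝ) (T t : ℕ) (H : Ω → ℝ) :
    Set (Ω → ℝ) :=
  {g | Measurable[F t] g ∧ ∃ ξ, Predictable F ξ ∧
    ∀ᵐ ω ∂P, H ω ≤ g ω + Gains X ξ t T ω}

/-- The set of sub-hedging prices at time `t` for the claim `H`. -/
def SubPrices {m : MeasurableSpace Ω} {d : ℕ} (P : Measure Ω)
    (F : Filtration ℕ m) (X : ℕ → Ω → Fin d → ℝ) (T t : ℕ) (H : Ω → ℝ) :
    Set (Ω → ℝ) :=
  {g | Measurable[F t] g ∧ ∃ ξ, Predictable F ξ ∧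
    ∀ᵐ ω ∂P, g ω + Gains X ξ t T ω ≤ H ω}

/-- The set of conditional expectations `E_Q[H | F_t]` over `Q ∈ M_e`. -/
def MPrices {m : MeasurableSpace Ω} {d : ℕ} (P : Measure Ω)
    (F : Filtration ℕ m) (X : ℕ → Ω → Fin d → ℝ) (T t : ℕ) (H : Ω → ℝ) :
    Set (Ω → ℝ) :=
  {f | ∃ Q : Measure Ω, IsEMM P Q F X T ∧ f = Q[H|F t]}

/-- `g` is a `P`-a.e. upper bound of the family `S`. -/
def IsAEUpperBound {_m : MeasurableSpace Ω} (P : Measure Ω)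
    (S : Set (Ω → ℝ)) (g : Ω → ℝ) : Prop :=
  ∀ f ∈ S, f ≤ᵐ[P] g

/-- `g` is a `P`-a.e. lower bound of the family `S`. -/
def IsAELowerBound {_m : MeasurableSpace Ω} (P : Measure Ω)
    (S : Set (Ω → ℝ)) (g : Ω → ℝ) : Prop :=
  ∀ f ∈ S, g ≤ᵐ[P] f

/-- `g` is (a version of) the essential supremum of the family `S` under `P`. -/
def IsEssSupOf {_m : MeasurableSpace Ω} (P : Measure Ω)
    (S : Set (Ω → ℝ)) (g : Ω → ℝ) : Prop :=
  IsAEUpperBound P S g ∧ ∀ h, IsAEUpperBound P S h → g ≤ᵐ[P] h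

/-- `g` is (a version of) the essential infimum of the family `S` under `P`. -/
def IsEssInfOf {_m : MeasurableSpace Ω} (P : Measure Ω)
    (S : Set (Ω → ℝ)) (g : Ω → ℝ) : Prop :=
  IsAELowerBound P S g ∧ ∀ h, IsAELowerBound P S h → h ≤ᵐ[P] g

open scoped ENNReal

/-- `f` is a version of the conditional expectation `E_Q[H | mt]` of the
nonnegative (extended-real valued) claim `H`, understood in `[0, ∞]`. -/
def IsCondExpNN {_m : MeasurableSpace Ω} (Q : Measure Ω)
    (mt : MeasurableSpace Ω) (H f : Ω → ℝ≥0∞) : Prop :=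
  Measurable[mt] f ∧ ∀ A : Set Ω, MeasurableSet[mt] A →
    ∫⁻ ω in A, f ω ∂Q = ∫⁻ ω in A, H ω ∂Q

namespace CCC17

variable {mt m' : MeasurableSpace Ω}

lemma trim_ac (hle : mt ≤ m') {μ ν : Measure Ω} (h : ν ≪ μ) :
    ν.trim hle ≪ μ.trim hle := by
  refine Measure.AbsolutelyContinuous.mk fun s hs h0 => ?_
  rw [trim_measurableSet_eq hle hs] at h0 ⊢
  exact h h0

lemma setLIntegral_eq_ind (μ : Measure Ω)
    {A : Set Ω} (hA : MeasurableSet A) (g : Ω → ℝ≥0∞) :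
    ∫⁻ ω in A, g ω ∂μ = ∫⁻ ω, A.indicator (fun _ => (1 : ℝ≥0∞)) ω * g ω ∂μ := by
  rw [← lintegral_indicator hA]
  congr 1; ext ω
  by_cases h : ω ∈ A <;> simp [h]

/-- Setwise lintegral equality on a sub-σ-algebra extends to `mt`-measurable multipliers. -/
lemma lintegral_mul_condNN (hle : mt ≤ m') (μ : Measure Ω)
    {H f χ : Ω → ℝ≥0∞} (hH : Measurable H) (hf : Measurable[mt] f) (hχ : Measurable[mt] χ)
    (heq : ∀ A, MeasurableSet[mt] A → ∫⁻ ω in A, f ω ∂μ = ∫⁻ ω in A, H ω ∂μ) :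
    ∫⁻ ω, χ ω * H ω ∂μ = ∫⁻ ω, χ ω * f ω ∂μ := by
  have htrim : (μ.withDensity H).trim hle = (μ.withDensity f).trim hle := by
    refine @Measure.ext Ω mt _ _ fun A hA => ?_
    rw [trim_measurableSet_eq hle hA, trim_measurableSet_eq hle hA,
      withDensity_apply _ (hle _ hA), withDensity_apply _ (hle _ hA)]
    exact (heq A hA).symm
  have h1 : ∫⁻ ω, χ ω * H ω ∂μ = ∫⁻ ω, χ ω ∂(μ.withDensity H) := by
    rw [lintegral_withDensity_eq_lintegral_mul μ hH (hχ.mono hle le_rfl)]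
    simp_rw [Pi.mul_apply, mul_comm]
  have h2 : ∫⁻ ω, χ ω * f ω ∂μ = ∫⁻ ω, χ ω ∂(μ.withDensity f) := by
    rw [lintegral_withDensity_eq_lintegral_mul μ (hf.mono hle le_rfl) (hχ.mono hle le_rfl)]
    simp_rw [Pi.mul_apply, mul_comm]
  rw [h1, h2, ← lintegral_trim hle hχ, ← lintegral_trim hle hχ, htrim]

lemma lintegral_rnDeriv_mul (μ ν : Measure Ω) [IsFiniteMeasure μ] [IsFiniteMeasure ν]
    (hνμ : ν ≪ μ) {g : Ω → ℝ≥0∞} (hg : Measurable g) :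
    ∫⁻ ω, ν.rnDeriv μ ω * g ω ∂μ = ∫⁻ ω, g ω ∂ν := by
  conv_rhs => rw [← Measure.withDensity_rnDeriv_eq ν μ hνμ]
  rw [lintegral_withDensity_eq_lintegral_mul μ (Measure.measurable_rnDeriv ν μ) hg]
  rfl

/-- The key identity: integrating `ψ ⋅ (e⁻¹ ⋅ (dν/dμ) ⋅ φ)` against `μ`, where `e` is the
density of `ν` w.r.t. `μ` on the sub-σ-algebra `mt`, replaces `φ` by (a version of) its
`ν`-conditional expectation on `mt`. -/
lemma key (hle : mt ≤ m') (μ ν : Measure Ω) [IsProbabilityMeasure μ] [IsProbabilityMeasure ν]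
    (hνμ : ν ≪ μ) (hμν : μ ≪ ν)
    {ψ φ f : Ω → ℝ≥0∞} (hψ : Measurable[mt] ψ) (hφ : Measurable φ) (hfm : Measurable[mt] f)
    (heq : ∀ A, MeasurableSet[mt] A → ∫⁻ ω in A, f ω ∂ν = ∫⁻ ω in A, φ ω ∂ν) :
    ∫⁻ ω, ψ ω * (((ν.trim hle).rnDeriv (μ.trim hle) ω)⁻¹ * (ν.rnDeriv μ ω * φ ω)) ∂μ
      = ∫⁻ ω, ψ ω * f ω ∂μ := by
  set e := (ν.trim hle).rnDeriv (μ.trim hle) with he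
  have hem : Measurable[mt] e := Measure.measurable_rnDeriv _ _
  have hχ : Measurable[mt] (fun ω => ψ ω * (e ω)⁻¹) := hψ.mul hem.inv
  have h1 : ∫⁻ ω, ψ ω * ((e ω)⁻¹ * (ν.rnDeriv μ ω * φ ω)) ∂μ
      = ∫⁻ ω, (ψ ω * (e ω)⁻¹) * φ ω ∂ν := by
    rw [← lintegral_rnDeriv_mul μ ν hνμ (g := fun ω => (ψ ω * (e ω)⁻¹) * φ ω) ((hχ.mono hle le_rfl).mul hφ)]
    exact lintegral_congr fun ω => by ring
  have h2 : ∫⁻ ω, (ψ ω * (e ω)⁻¹) * φ ω ∂ν = ∫⁻ ω, (ψ ω * (e ω)⁻¹) * f ω ∂ν :=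
    lintegral_mul_condNN hle ν hφ hfm hχ heq
  have h3 : ∫⁻ ω, (ψ ω * (e ω)⁻¹) * f ω ∂ν
      = ∫⁻ ω, (ψ ω * (e ω)⁻¹) * f ω ∂(ν.trim hle) :=
    (lintegral_trim hle (hχ.mul hfm)).symm
  have h4 : ν.trim hle = (μ.trim hle).withDensity e :=
    (Measure.withDensity_rnDeriv_eq (ν.trim hle) (μ.trim hle) (trim_ac hle hνμ)).symm
  have h5 : ∫⁻ ω, (ψ ω * (e ω)⁻¹) * f ω ∂((μ.trim hle).withDensity e)
      = ∫⁻ ω, e ω * ((ψ ω * (e ω)⁻¹) * f ω) ∂(μ.trim hle) := by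
    rw [lintegral_withDensity_eq_lintegral_mul _ hem (g := fun ω => (ψ ω * (e ω)⁻¹) * f ω) (hχ.mul hfm)]
    rfl
  have hpos : ∀ᵐ ω ∂(μ.trim hle), 0 < e ω := Measure.rnDeriv_pos' (trim_ac hle hμν)
  have hlt : ∀ᵐ ω ∂(μ.trim hle), e ω < ∞ := Measure.rnDeriv_lt_top _ _
  have h6 : ∫⁻ ω, e ω * ((ψ ω * (e ω)⁻¹) * f ω) ∂(μ.trim hle)
      = ∫⁻ ω, ψ ω * f ω ∂(μ.trim hle) := by
    refine lintegral_congr_ae ?_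
    filter_upwards [hpos, hlt] with ω h0 hl
    rw [show e ω * ((ψ ω * (e ω)⁻¹) * f ω) = (e ω * (e ω)⁻¹) * (ψ ω * f ω) by ring,
      ENNReal.mul_inv_cancel h0.ne' hl.ne, one_mul]
  rw [h1, h2, h3, h4, h5, h6, lintegral_trim hle (f := fun ω => ψ ω * f ω) (hψ.mul hfm)]

/-- One-step martingale property of an EMM in `lintegral` form. -/
lemma emm_onestep {m : MeasurableSpace Ω} {d T : ℕ} {F : Filtration ℕ m} {P Qn : Measure Ω}
    [IsProbabilityMeasure P]
    {X : ℕ → Ω → Fin d → ℝ} (hXpos : ∀ t i, ∀ᵐ ω ∂P, 0 ≤ X t ω i)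
    (hQ : IsEMM P Qn F X T) {s : ℕ} (hs : s < T) (i : Fin d)
    {A : Set Ω} (hA : MeasurableSet[F s] A) :
    ∫⁻ ω in A, ENNReal.ofReal (X (s + 1) ω i) ∂Qn
      = ∫⁻ ω in A, ENNReal.ofReal (X s ω i) ∂Qn := by
  obtain ⟨hprob, hequiv, hint, hmart⟩ := hQ
  haveI := hprob
  have hQP : Qn ≪ P := fun B hB => (hequiv B).mp hB
  have hpos : ∀ u, ∀ᵐ ω ∂Qn, 0 ≤ X u ω i := fun u => hQP.ae_le (hXpos u i)
  have hA' : MeasurableSet A := F.le s A hA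
  have hreal : ∫ ω in A, X (s + 1) ω i ∂Qn = ∫ ω in A, X s ω i ∂Qn := by
    rw [← setIntegral_condExp (F.le s) (hint (s + 1) hs i) hA]
    exact setIntegral_congr_ae hA' ((hmart s hs i).mono fun ω h _ => h)
  rw [← ofReal_integral_eq_lintegral_ofReal ((hint (s + 1) hs i).restrict)
      (ae_restrict_of_ae (hpos (s + 1))),
    ← ofReal_integral_eq_lintegral_ofReal ((hint s hs.le i).restrict)
      (ae_restrict_of_ae (hpos s)), hreal]

/-- Multi-step martingale property of an EMM in `lintegral` form. -/
lemma emm_multistep {m : MeasurableSpace Ω} {d T : ℕ} {F : Filtration ℕ m} {P Qn : Measure Ω}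
    [IsProbabilityMeasure P]
    {X : ℕ → Ω → Fin d → ℝ} (hXpos : ∀ t i, ∀ᵐ ω ∂P, 0 ≤ X t ω i)
    (hQ : IsEMM P Qn F X T) {t u : ℕ} (htu : t ≤ u) (hu : u ≤ T) (i : Fin d)
    {A : Set Ω} (hA : MeasurableSet[F t] A) :
    ∫⁻ ω in A, ENNReal.ofReal (X u ω i) ∂Qn
      = ∫⁻ ω in A, ENNReal.ofReal (X t ω i) ∂Qn := by
  induction u, htu using Nat.le_induction with
  | base => rfl
  | succ u htu ih =>
    rw [← ih (Nat.le_of_succ_le hu)]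
    exact emm_onestep hXpos hQ (Nat.lt_of_succ_le hu) i (F.mono htu A hA)

end CCC17

/-- For every `t` and every claim `H ∈ L^0_+(F_T)`, the set
`{E_Q[H|F_t] : Q ∈ M_e}` is `F_t`-countably convex: for `(Qⁿ) ⊆ M_e` and
`F_t`-measurable weights `λⁿ ≥ 0` with `∑ λⁿ = 1` a.s., there is `Q ∈ M_e` whose
conditional expectation of `H` equals `∑ λⁿ E_{Qⁿ}[H | F_t]` a.s. -/
theorem conditional_prices_countably_convex
    {m : MeasurableSpace Ω} {d T : ℕ} (F : Filtration ℕ m)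
    (P : Measure Ω) [IsProbabilityMeasure P]
    (X : ℕ → Ω → Fin d → ℝ) (hX : ∀ t, Measurable[F t] (X t))
    (hFT : (F T : MeasurableSpace Ω) = m)
    (hF0 : ∀ s : Set Ω, MeasurableSet[F 0] s → P s = 0 ∨ P s = 1)
    (hXpos : ∀ t i, ∀ᵐ ω ∂P, 0 ≤ X t ω i)
    (hNA : ∃ Q : Measure Ω, IsEMM P Q F X T)
    (t : ℕ) (ht : t ≤ T)
    (H : Ω → ℝ≥0∞) (hH : Measurable H)
    (Q : ℕ → Measure Ω) (hQ : ∀ n, IsEMM P (Q n) F X T)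
    (f : ℕ → Ω → ℝ≥0∞) (hf : ∀ n, IsCondExpNN (Q n) (F t) H (f n))
    (lam : ℕ → Ω → ℝ≥0∞) (hlamm : ∀ n, Measurable[F t] (lam n))
    (hlam1 : ∀ᵐ ω ∂P, ∑' n, lam n ω = 1) :
    ∃ (Q' : Measure Ω) (g : Ω → ℝ≥0∞),
      IsEMM P Q' F X T ∧ IsCondExpNN Q' (F t) H g ∧
      (fun ω => ∑' n, lam n ω * f n ω) =ᵐ[P] g := by
  classical
  have hprob : ∀ n, IsProbabilityMeasure (Q n) := fun n => (hQ n).1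
  haveI := hprob 0
  have hQP : ∀ n, Q n ≪ P := fun n B hB => ((hQ n).2.1 B).mp hB
  have hPQ : ∀ n, P ≪ Q n := fun n B hB => ((hQ n).2.1 B).mpr hB
  have hQQ : ∀ n k, Q n ≪ Q k := fun n k => (hQP n).trans (hPQ k)
  have hle : F t ≤ m := F.le t
  set e : ℕ → Ω → ℝ≥0∞ := fun n => ((Q n).trim hle).rnDeriv ((Q 0).trim hle) with he
  set D : ℕ → Ω → ℝ≥0∞ := fun n => (Q n).rnDeriv (Q 0) with hDdef
  set W : ℕ → Ω → ℝ≥0∞ := fun n ω => (e n ω)⁻¹ * D n ω with hW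
  set Z : Ω → ℝ≥0∞ := fun ω => ∑' n, lam n ω * W n ω with hZdef
  have hem : ∀ n, Measurable[F t] (e n) := fun n => Measure.measurable_rnDeriv _ _
  have hDm : ∀ n, Measurable (D n) := fun n => Measure.measurable_rnDeriv _ _
  have hlamm' : ∀ n, Measurable (lam n) := fun n => (hlamm n).mono hle le_rfl
  have hWm : ∀ n, Measurable (W n) := fun n => (((hem n).mono hle le_rfl).inv).mul (hDm n)
  have hZm : Measurable Z := Measurable.ennreal_tsum fun n => (hlamm' n).mul (hWm n)
  set Q' : Measure Ω := (Q 0).withDensity Z with hQ'def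
  -- expansion of `Q'`-lintegrals
  have hexp : ∀ g : Ω → ℝ≥0∞, Measurable g →
      ∫⁻ ω, g ω ∂Q' = ∑' n, ∫⁻ ω, lam n ω * (W n ω * g ω) ∂(Q 0) := by
    intro g hg
    rw [hQ'def, lintegral_withDensity_eq_lintegral_mul _ hZm hg,
      ← lintegral_tsum (f := fun n ω => lam n ω * (W n ω * g ω)) fun n => ((hlamm' n).mul ((hWm n).mul hg)).aemeasurable]
    refine lintegral_congr fun ω => ?_
    simp only [Pi.mul_apply, hZdef]
    rw [← ENNReal.tsum_mul_right]
    exact tsum_congr fun n => by ring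
  -- wrapper around the key lemma
  have keyn : ∀ (n : ℕ) (ψ φ f : Ω → ℝ≥0∞), Measurable[F t] ψ → Measurable φ →
      Measurable[F t] f →
      (∀ A, MeasurableSet[F t] A → ∫⁻ ω in A, f ω ∂(Q n) = ∫⁻ ω in A, φ ω ∂(Q n)) →
      ∫⁻ ω, ψ ω * (W n ω * φ ω) ∂(Q 0) = ∫⁻ ω, ψ ω * f ω ∂(Q 0) := by
    intro n ψ φ f hψ hφ hfm heq
    haveI := hprob n
    have h := CCC17.key hle (Q 0) (Q n) (hQQ n 0) (hQQ 0 n) hψ hφ hfm heq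
    rw [← h]
    exact lintegral_congr fun ω => by simp only [hW]; ring
  -- collapse of the weights
  have hlam0 : ∀ᵐ ω ∂(Q 0), ∑' n, lam n ω = 1 := (hQP 0).ae_le hlam1
  have hcollapse : ∀ g : Ω → ℝ≥0∞, Measurable g →
      ∑' n, ∫⁻ ω, lam n ω * g ω ∂(Q 0) = ∫⁻ ω, g ω ∂(Q 0) := by
    intro g hg
    rw [← lintegral_tsum (f := fun n ω => lam n ω * g ω) fun n => ((hlamm' n).mul hg).aemeasurable]
    refine lintegral_congr_ae ?_
    filter_upwards [hlam0] with ω hω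
    rw [ENNReal.tsum_mul_right, hω, one_mul]
  -- `Q'` is a probability measure
  have hone : ∀ n (A : Set Ω), MeasurableSet[F t] A →
      ∫⁻ ω in A, (fun _ => (1 : ℝ≥0∞)) ω ∂(Q n) = ∫⁻ ω in A, (fun _ => (1 : ℝ≥0∞)) ω ∂(Q n) :=
    fun _ _ _ => rfl
  haveI hQ'prob : IsProbabilityMeasure Q' := by
    constructor
    rw [← lintegral_one, hexp (fun _ => 1) measurable_const]
    have h1 : ∀ n : ℕ, ∫⁻ ω, lam n ω * (W n ω * (fun _ => (1:ℝ≥0∞)) ω) ∂(Q 0)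
        = ∫⁻ ω, lam n ω * (fun _ => (1:ℝ≥0∞)) ω ∂(Q 0) :=
      fun n => keyn n (lam n) (fun _ => 1) (fun _ => 1) (hlamm n) measurable_const
        measurable_const (hone n)
    simp_rw [h1, hcollapse (fun _ => 1) measurable_const, lintegral_one, measure_univ]
  -- equivalence of `Q'` and `P`
  have hQ'Q0 : Q' ≪ Q 0 := withDensity_absolutelyContinuous _ _
  have hQ'P : Q' ≪ P := hQ'Q0.trans (hQP 0)
  have hDpos : ∀ᵐ ω ∂(Q 0), ∀ n, 0 < D n ω := by
    rw [ae_all_iff]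
    intro n
    haveI := hprob n
    exact Measure.rnDeriv_pos' (hQQ 0 n)
  have helt : ∀ᵐ ω ∂(Q 0), ∀ n, e n ω < ∞ := by
    rw [ae_all_iff]
    intro n
    haveI := hprob n
    exact ae_of_ae_trim hle (Measure.rnDeriv_lt_top _ _)
  have hequiv' : ∀ A : Set Ω, P A = 0 ↔ Q' A = 0 := by
    intro A
    refine ⟨fun h => hQ'P h, fun h => ?_⟩
    set B := toMeasurable Q' A with hB
    have hBm : MeasurableSet B := measurableSet_toMeasurable _ _
    have hQ'B : Q' B = 0 := by rw [hB, measure_toMeasurable]; exact h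
    have h0 : ∫⁻ ω in B, Z ω ∂(Q 0) = 0 := by
      rw [← withDensity_apply _ hBm]; exact hQ'B
    have hz : ∀ᵐ ω ∂(Q 0), ω ∈ B → Z ω = 0 := (setLIntegral_eq_zero_iff hBm hZm).mp h0
    have hnotB : ∀ᵐ ω ∂(Q 0), ω ∉ B := by
      filter_upwards [hz, hDpos, helt, hlam0] with ω h1 h2 h3 h4
      intro hmem
      have hZ0 := h1 hmem
      have hlamz : ∀ n, lam n ω = 0 := by
        intro n
        have hn := (ENNReal.tsum_eq_zero.mp hZ0) n
        have hWpos : 0 < W n ω :=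
          ENNReal.mul_pos (ENNReal.inv_ne_zero.mpr (h3 n).ne) (h2 n).ne'
        rcases mul_eq_zero.mp hn with h' | h'
        · exact h'
        · exact absurd h' hWpos.ne'
      simp only [hlamz, tsum_zero] at h4
      exact zero_ne_one h4
    have hBnull : Q 0 B = 0 := by
      have := ae_iff.mp hnotB
      simpa using this
    exact measure_mono_null (subset_toMeasurable _ _) (((hQ 0).2.1 B).mpr hBnull)
  -- the nonnegative price process in `ℝ≥0∞` form
  set eX : ℕ → Fin d → Ω → ℝ≥0∞ := fun u i ω => ENNReal.ofReal (X u ω i) with heXdef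
  have heXm : ∀ u i, Measurable[F u] (eX u i) :=
    fun u i => ENNReal.measurable_ofReal.comp ((measurable_pi_apply i).comp (hX u))
  have heXm' : ∀ u i, Measurable (eX u i) := fun u i => (heXm u i).mono (F.le u) le_rfl
  have hcondX : ∀ n u, u ≤ T → ∀ (i : Fin d) A, MeasurableSet[F t] A →
      ∫⁻ ω in A, eX (min u t) i ω ∂(Q n) = ∫⁻ ω in A, eX u i ω ∂(Q n) := by
    intro n u hu i A hA
    haveI := hprob n
    rcases le_total u t with hut | htu
    · rw [min_eq_left hut]
    · rw [min_eq_right htu]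
      exact (CCC17.emm_multistep hXpos (hQ n) htu hu i hA).symm
  -- lintegral of prices under `Q'`
  have hXQ' : ∀ u, u ≤ T → ∀ i, ∫⁻ ω, eX u i ω ∂Q' = ∫⁻ ω, eX (min u t) i ω ∂(Q 0) := by
    intro u hu i
    rw [hexp (eX u i) (heXm' u i)]
    have hminm : Measurable[F t] (eX (min u t) i) :=
      (heXm (min u t) i).mono (F.mono (min_le_right u t)) le_rfl
    have h1 : ∀ n : ℕ, ∫⁻ ω, lam n ω * (W n ω * eX u i ω) ∂(Q 0)
        = ∫⁻ ω, lam n ω * eX (min u t) i ω ∂(Q 0) :=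
      fun n => keyn n (lam n) (eX u i) (eX (min u t) i) (hlamm n) (heXm' u i) hminm
        (hcondX n u hu i)
    simp_rw [h1]
    exact hcollapse (eX (min u t) i) (hminm.mono hle le_rfl)
  -- nonnegativity and integrability under `Q'`
  have hXnn' : ∀ u i, ∀ᵐ ω ∂Q', 0 ≤ X u ω i := fun u i => hQ'P.ae_le (hXpos u i)
  have hint' : ∀ u, u ≤ T → ∀ i, Integrable (fun ω => X u ω i) Q' := by
    intro u hu i
    refine ⟨((measurable_pi_apply i).comp ((hX u).mono (F.le u) le_rfl)).aestronglyMeasurable, ?_⟩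
    rw [hasFiniteIntegral_iff_ofReal (by filter_upwards [hXnn' u i] with ω hω using hω)]
    rw [hXQ' u hu i]
    have hminT : min u t ≤ T := le_trans (min_le_left u t) hu
    rw [← ofReal_integral_eq_lintegral_ofReal ((hQ 0).2.2.1 (min u t) hminT i)
      ((hQP 0).ae_le (hXpos (min u t) i))]
    exact ENNReal.ofReal_lt_top
  -- martingale property under `Q'`
  have hmart' : ∀ s, s < T → ∀ i : Fin d,
      (Q'[(fun ω => X (s + 1) ω i)|F s]) =ᵐ[Q'] fun ω => X s ω i := by
    intro s hs i
    haveI : SigmaFinite (Q'.trim (F.le s)) := by infer_instance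
    have hlint : ∀ A, MeasurableSet[F s] A →
        ∫⁻ ω in A, eX (s + 1) i ω ∂Q' = ∫⁻ ω in A, eX s i ω ∂Q' := by
      intro A hA
      have hA' : MeasurableSet A := F.le s A hA
      have hind : Measurable (A.indicator (fun _ => (1 : ℝ≥0∞))) :=
        measurable_const.indicator hA'
      rcases le_or_gt t s with hts | hst
      · -- case `t ≤ s`
        rw [CCC17.setLIntegral_eq_ind Q' hA' _, CCC17.setLIntegral_eq_ind Q' hA' _,
          hexp (fun ω => A.indicator (fun _ => (1:ℝ≥0∞)) ω * eX (s+1) i ω)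
            (hind.mul (heXm' (s+1) i)),
          hexp (fun ω => A.indicator (fun _ => (1:ℝ≥0∞)) ω * eX s i ω)
            (hind.mul (heXm' s i))]
        refine tsum_congr fun n => ?_
        haveI := hprob n
        set χ : Ω → ℝ≥0∞ :=
          fun ω => (lam n ω * (e n ω)⁻¹) * A.indicator (fun _ => (1:ℝ≥0∞)) ω with hχdef
        have hindFs : Measurable[F s] (A.indicator (fun _ => (1 : ℝ≥0∞))) :=
          (@measurable_const ℝ≥0∞ Ω _ (F s) 1).indicator hA
        have hχmFs : Measurable[F s] χ :=
          (((hlamm n).mono (F.mono hts) le_rfl).mul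
            (((hem n).mono (F.mono hts) le_rfl).inv)).mul hindFs
        have hχm : Measurable χ := hχmFs.mono (F.le s) le_rfl
        have step : ∀ u : ℕ,
            ∫⁻ ω, lam n ω * (W n ω * (A.indicator (fun _ => (1:ℝ≥0∞)) ω * eX u i ω)) ∂(Q 0)
              = ∫⁻ ω, χ ω * eX u i ω ∂(Q n) := by
          intro u
          rw [← CCC17.lintegral_rnDeriv_mul (Q 0) (Q n) (hQQ n 0) (g := fun ω => χ ω * eX u i ω) (hχm.mul (heXm' u i))]
          exact lintegral_congr fun ω => by simp only [hχdef, hW]; ring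
        rw [step (s+1), step s]
        exact CCC17.lintegral_mul_condNN (F.le s) (Q n) (heXm' (s+1) i) (heXm s i) hχmFs
          (fun B hB => (CCC17.emm_onestep hXpos (hQ n) hs i hB).symm)
      · -- case `s < t`
        have redq : ∀ u, u ≤ t →
            ∫⁻ ω in A, eX u i ω ∂Q' = ∫⁻ ω in A, eX u i ω ∂(Q 0) := by
          intro u hut
          rw [CCC17.setLIntegral_eq_ind Q' hA' _,
            hexp (fun ω => A.indicator (fun _ => (1:ℝ≥0∞)) ω * eX u i ω)
              (hind.mul (heXm' u i)),
            CCC17.setLIntegral_eq_ind (Q 0) hA' _]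
          have h1 : ∀ n : ℕ,
              ∫⁻ ω, lam n ω * (W n ω * (A.indicator (fun _ => (1:ℝ≥0∞)) ω * eX u i ω)) ∂(Q 0)
                = ∫⁻ ω, lam n ω * (A.indicator (fun _ => (1:ℝ≥0∞)) ω * eX u i ω) ∂(Q 0) := by
            intro n
            have hψ : Measurable[F t] (fun ω => lam n ω * A.indicator (fun _ => (1:ℝ≥0∞)) ω) :=
              (hlamm n).mul ((@measurable_const ℝ≥0∞ Ω _ (F t) 1).indicator
                (F.mono hst.le A hA))
            have hfm : Measurable[F t] (eX u i) := (heXm u i).mono (F.mono hut) le_rfl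
            have h2 := keyn n (fun ω => lam n ω * A.indicator (fun _ => (1:ℝ≥0∞)) ω)
              (eX u i) (eX u i) hψ (heXm' u i) hfm (fun B hB => rfl)
            calc ∫⁻ ω, lam n ω * (W n ω * (A.indicator (fun _ => (1:ℝ≥0∞)) ω * eX u i ω)) ∂(Q 0)
                = ∫⁻ ω, (lam n ω * A.indicator (fun _ => (1:ℝ≥0∞)) ω) * (W n ω * eX u i ω) ∂(Q 0) :=
                  lintegral_congr fun ω => by ring
              _ = ∫⁻ ω, (lam n ω * A.indicator (fun _ => (1:ℝ≥0∞)) ω) * eX u i ω ∂(Q 0) := h2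
              _ = ∫⁻ ω, lam n ω * (A.indicator (fun _ => (1:ℝ≥0∞)) ω * eX u i ω) ∂(Q 0) :=
                  lintegral_congr fun ω => by ring
          simp_rw [h1]
          exact hcollapse (fun ω => A.indicator (fun _ => (1:ℝ≥0∞)) ω * eX u i ω)
            (hind.mul (heXm' u i))
        rw [redq (s+1) hst, redq s hst.le]
        exact CCC17.emm_onestep hXpos (hQ 0) hs i hA
    have hnn : ∀ u, (0 : Ω → ℝ) ≤ᵐ[Q'] fun ω => X u ω i := by
      intro u
      filter_upwards [hXnn' u i] with ω hω using hω
    have hreal : ∀ A, MeasurableSet[F s] A → Q' A < ∞ →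
        ∫ ω in A, X s ω i ∂Q' = ∫ ω in A, X (s+1) ω i ∂Q' := by
      intro A hA _
      have h1 := hlint A hA
      have e1 : ENNReal.ofReal (∫ ω in A, X (s+1) ω i ∂Q')
          = ENNReal.ofReal (∫ ω in A, X s ω i ∂Q') := by
        rw [ofReal_integral_eq_lintegral_ofReal ((hint' (s+1) hs i).restrict)
            (ae_restrict_of_ae (hnn (s+1))),
          ofReal_integral_eq_lintegral_ofReal ((hint' s hs.le i).restrict)
            (ae_restrict_of_ae (hnn s))]
        exact h1
      have n1 : 0 ≤ ∫ ω in A, X (s+1) ω i ∂Q' :=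
        integral_nonneg_of_ae (ae_restrict_of_ae (hnn (s+1)))
      have n2 : 0 ≤ ∫ ω in A, X s ω i ∂Q' :=
        integral_nonneg_of_ae (ae_restrict_of_ae (hnn s))
      exact ((ENNReal.ofReal_eq_ofReal_iff n1 n2).mp e1).symm
    exact (ae_eq_condExp_of_forall_setIntegral_eq (F.le s) (hint' (s+1) hs i)
      (fun B hB _ => (hint' s hs.le i).integrableOn)
      (fun B hB hB' => hreal B hB hB')
      (StronglyMeasurable.aestronglyMeasurable
        (((measurable_pi_apply i).comp (hX s)).stronglyMeasurable))).symm
  -- the conditional expectation of `H` under `Q'`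
  set g : Ω → ℝ≥0∞ := fun ω => ∑' n, lam n ω * f n ω with hgdef
  have hgm : Measurable[F t] g := Measurable.ennreal_tsum fun n => (hlamm n).mul (hf n).1
  have hgm' : Measurable g := hgm.mono hle le_rfl
  have hcond' : IsCondExpNN Q' (F t) H g := by
    refine ⟨hgm, fun A hA => ?_⟩
    have hA' : MeasurableSet A := hle A hA
    have hind : Measurable (A.indicator (fun _ => (1 : ℝ≥0∞))) :=
      measurable_const.indicator hA'
    have hindFt : Measurable[F t] (A.indicator (fun _ => (1 : ℝ≥0∞))) :=
      (@measurable_const ℝ≥0∞ Ω _ (F t) 1).indicator hA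
    -- LHS
    have hLHS : ∫⁻ ω in A, g ω ∂Q'
        = ∫⁻ ω, A.indicator (fun _ => (1:ℝ≥0∞)) ω * g ω ∂(Q 0) := by
      rw [CCC17.setLIntegral_eq_ind Q' hA' _,
        hexp (fun ω => A.indicator (fun _ => (1:ℝ≥0∞)) ω * g ω) (hind.mul hgm')]
      have h1 : ∀ n : ℕ,
          ∫⁻ ω, lam n ω * (W n ω * (A.indicator (fun _ => (1:ℝ≥0∞)) ω * g ω)) ∂(Q 0)
            = ∫⁻ ω, lam n ω * (A.indicator (fun _ => (1:ℝ≥0∞)) ω * g ω) ∂(Q 0) := by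
        intro n
        have hψ : Measurable[F t] (fun ω => lam n ω * (A.indicator (fun _ => (1:ℝ≥0∞)) ω * g ω)) :=
          (hlamm n).mul (hindFt.mul hgm)
        have h2 := keyn n (fun ω => lam n ω * (A.indicator (fun _ => (1:ℝ≥0∞)) ω * g ω))
          (fun _ => 1) (fun _ => 1) hψ measurable_const measurable_const (hone n)
        calc ∫⁻ ω, lam n ω * (W n ω * (A.indicator (fun _ => (1:ℝ≥0∞)) ω * g ω)) ∂(Q 0)
            = ∫⁻ ω, (lam n ω * (A.indicator (fun _ => (1:ℝ≥0∞)) ω * g ω)) * (W n ω * (fun _ => (1:ℝ≥0∞)) ω) ∂(Q 0) :=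
              lintegral_congr fun ω => by simp only []; ring
          _ = ∫⁻ ω, (lam n ω * (A.indicator (fun _ => (1:ℝ≥0∞)) ω * g ω)) * (fun _ => (1:ℝ≥0∞)) ω ∂(Q 0) := h2
          _ = ∫⁻ ω, lam n ω * (A.indicator (fun _ => (1:ℝ≥0∞)) ω * g ω) ∂(Q 0) :=
              lintegral_congr fun ω => by simp only []; ring
      simp_rw [h1]
      exact hcollapse (fun ω => A.indicator (fun _ => (1:ℝ≥0∞)) ω * g ω) (hind.mul hgm')
    -- RHS
    have hRHS : ∫⁻ ω in A, H ω ∂Q'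
        = ∫⁻ ω, A.indicator (fun _ => (1:ℝ≥0∞)) ω * g ω ∂(Q 0) := by
      rw [CCC17.setLIntegral_eq_ind Q' hA' _,
        hexp (fun ω => A.indicator (fun _ => (1:ℝ≥0∞)) ω * H ω) (hind.mul hH)]
      have h1 : ∀ n : ℕ,
          ∫⁻ ω, lam n ω * (W n ω * (A.indicator (fun _ => (1:ℝ≥0∞)) ω * H ω)) ∂(Q 0)
            = ∫⁻ ω, A.indicator (fun _ => (1:ℝ≥0∞)) ω * (lam n ω * f n ω) ∂(Q 0) := by
        intro n
        have hψ : Measurable[F t] (fun ω => lam n ω * A.indicator (fun _ => (1:ℝ≥0∞)) ω) :=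
          (hlamm n).mul hindFt
        have h2 := keyn n (fun ω => lam n ω * A.indicator (fun _ => (1:ℝ≥0∞)) ω)
          H (f n) hψ hH (hf n).1 (hf n).2
        calc ∫⁻ ω, lam n ω * (W n ω * (A.indicator (fun _ => (1:ℝ≥0∞)) ω * H ω)) ∂(Q 0)
            = ∫⁻ ω, (lam n ω * A.indicator (fun _ => (1:ℝ≥0∞)) ω) * (W n ω * H ω) ∂(Q 0) :=
              lintegral_congr fun ω => by ring
          _ = ∫⁻ ω, (lam n ω * A.indicator (fun _ => (1:ℝ≥0∞)) ω) * f n ω ∂(Q 0) := h2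
          _ = ∫⁻ ω, A.indicator (fun _ => (1:ℝ≥0∞)) ω * (lam n ω * f n ω) ∂(Q 0) :=
              lintegral_congr fun ω => by ring
      simp_rw [h1]
      rw [← lintegral_tsum (f := fun n ω => A.indicator (fun _ => (1:ℝ≥0∞)) ω * (lam n ω * f n ω)) fun n => (hind.mul ((hlamm' n).mul
        (((hf n).1).mono hle le_rfl))).aemeasurable]
      refine lintegral_congr fun ω => ?_
      rw [ENNReal.tsum_mul_left]
    rw [hLHS, hRHS]
  refine ⟨Q', g, ⟨hQ'prob, hequiv', fun u hu i => hint' u hu i, hmart'⟩, hcond', ?_⟩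
  exact Filter.EventuallyEq.rfl
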